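/- Let Δt > 0 and ξ, Π, A, B, Π′ ∈ ℝ³ satisfy one step of the rigid-body midpoint integrator: d⁺(Δt,ξ,A) = Π, d⁺(Δt,ξ,B) = d⁻(Δt,ξ,A), and Π′ = d⁻(Δt,ξ,B). Let R be any 3×3 real matrix and let R′ := R · cay(Δtξ̂) · cay(Δtξ̂) be the reconstructed attitude after one step. Then the spatial angular momentum is conserved: R′ · Π′ = R · Π. (This is the discrete Noether theorem for the left SO(3)-invariance of the rigid body Hamiltonians.) -/

import Mathlib

open Matrix

noncomputable section

/-- The hat map: the 3×3 skew-symmetric matrix `ξ̂` with `ξ̂ v = ξ × v`. -/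
def hat (ξ : Fin 3 → ℝ) : Matrix (Fin 3) (Fin 3) ℝ :=
  !![0, -ξ 2, ξ 1; ξ 2, 0, -ξ 0; -ξ 1, ξ 0, 0]

/-- The Cayley transform `cay(hξ̂) = (I − (h/2)ξ̂)⁻¹ (I + (h/2)ξ̂)`. -/
def cay (h : ℝ) (ξ : Fin 3 → ℝ) : Matrix (Fin 3) (Fin 3) ℝ :=
  (1 - (h / 2) • hat ξ)⁻¹ * (1 + (h / 2) • hat ξ)

/-- `d⁺(h,ξ,Π) = Π + (h/2) ξ×Π − (h²/4)(ξ·Π)ξ`. -/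
def dplus (h : ℝ) (ξ Pv : Fin 3 → ℝ) : Fin 3 → ℝ :=
  Pv + (h / 2) • (ξ ⨯₃ Pv) - (h ^ 2 / 4 * (ξ ⬝ᵥ Pv)) • ξ

/-- `d⁻(h,ξ,Π) = Π − (h/2) ξ×Π − (h²/4)(ξ·Π)ξ`. -/
def dminus (h : ℝ) (ξ Pv : Fin 3 → ℝ) : Fin 3 → ℝ :=
  Pv - (h / 2) • (ξ ⨯₃ Pv) - (h ^ 2 / 4 * (ξ ⬝ᵥ Pv)) • ξ

lemma key_mulVec (h : ℝ) (ξ P : Fin 3 → ℝ) :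
    (1 - (h / 2) • hat ξ).mulVec (dplus h ξ P)
      = (1 + (h / 2) • hat ξ).mulVec (dminus h ξ P) := by
  funext i
  fin_cases i <;>
    simp [hat, dplus, dminus, Matrix.mulVec, dotProduct, crossProduct,
      Fin.sum_univ_three, Matrix.one_apply, Matrix.sub_apply, Matrix.add_apply,
      Matrix.smul_apply, Matrix.vecHead, Matrix.vecTail] <;> ring

lemma det_unit (h : ℝ) (ξ : Fin 3 → ℝ) : IsUnit (1 - (h / 2) • hat ξ).det := by
  have : (1 - (h / 2) • hat ξ).det = 1 + (h/2)^2 * (ξ 0 ^2 + ξ 1 ^2 + ξ 2 ^2) := by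
    simp [Matrix.det_fin_three, hat, Matrix.one_apply, Matrix.sub_apply, Matrix.smul_apply]
    ring
  rw [this]
  have : (0:ℝ) < 1 + (h/2)^2 * (ξ 0 ^2 + ξ 1 ^2 + ξ 2 ^2) := by positivity
  exact (ne_of_gt this).isUnit

lemma cay_dminus (h : ℝ) (ξ P : Fin 3 → ℝ) :
    (cay h ξ).mulVec (dminus h ξ P) = dplus h ξ P := by
  rw [cay, ← Matrix.mulVec_mulVec, ← key_mulVec, Matrix.mulVec_mulVec,
    Matrix.nonsing_inv_mul _ (det_unit h ξ), Matrix.one_mulVec]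

/-- Discrete Noether theorem for the left `SO(3)`-invariance of the rigid body Hamiltonians:
one step of the rigid-body stochastic variational midpoint integrator, together with the
attitude reconstruction `R′ = R · cay(Δtξ̂) · cay(Δtξ̂)`, conserves the spatial angular
momentum: `R′ Π′ = R Π`. -/
theorem midpoint_step_conserves_spatial_momentum
    (Δt : ℝ) (hΔt : 0 < Δt) (ξ Pv A B Pv' : Fin 3 → ℝ)
    (h1 : dplus Δt ξ A = Pv)
    (h2 : dplus Δt ξ B = dminus Δt ξ A)
    (h3 : Pv' = dminus Δt ξ B)
    (R R' : Matrix (Fin 3) (Fin 3) ℝ)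
    (hR' : R' = R * cay Δt ξ * cay Δt ξ) :
    R'.mulVec Pv' = R.mulVec Pv := by
  subst hR' h3 h1
  rw [← Matrix.mulVec_mulVec, ← Matrix.mulVec_mulVec, cay_dminus, h2, cay_dminus]
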